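/- (Correctness of pivoting) Let G be a graph, K a clique, cand and fini disjoint vertex sets with every element of cand ∪ fini adjacent to all of K. Let u ∈ cand ∪ fini be any vertex. Then every maximal clique C of G with K ⊆ C ⊆ K ∪ cand contains at least one vertex of cand \ Γ(u). -/

import Mathlib

/-- correctness of pivoting: every maximal clique `C` with
`K ⊆ C ⊆ K ∪ cand` contains a vertex of `cand \ Γ(u)` for any pivot
`u ∈ cand ∪ fini`. -/
theorem pivot_correctness {V : Type*} (G : SimpleGraph V) (K cand fini : Set V)
    (hK : G.IsClique K) (hdisj : Disjoint cand fini)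
    (hadj : ∀ w ∈ cand ∪ fini, ∀ u ∈ K, G.Adj w u)
    (u : V) (hu : u ∈ cand ∪ fini)
    (C : Set V) (hC : G.IsClique C)
    (hCmax : ∀ D : Set V, G.IsClique D → C ⊆ D → C = D)
    (hKC : K ⊆ C) (hCsub : C ⊆ K ∪ cand) :
    (C ∩ (cand \ G.neighborSet u)).Nonempty := by
  by_contra hempty
  rw [Set.not_nonempty_iff_eq_empty] at hempty
  -- every vertex of C ∩ cand is adjacent to u
  have hnbr : ∀ x ∈ C, x ∈ cand → G.Adj u x := by
    intro x hxC hxcand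
    by_contra hna
    have : x ∈ C ∩ (cand \ G.neighborSet u) :=
      ⟨hxC, hxcand, fun h => hna h⟩
    simp [hempty] at this
  have huK : u ∉ K := fun h => G.irrefl (hadj u hu u h)
  -- insert u C is a clique
  have hclique : G.IsClique (insert u C) := by
    apply hC.insert
    intro x hxC hxu
    rcases hCsub hxC with hxK | hxcand
    · exact hadj u hu x hxK
    · exact hnbr x hxC hxcand
  have := hCmax (insert u C) hclique (Set.subset_insert u C)
  have huC : u ∈ C := this ▸ Set.mem_insert u C
  rcases hCsub huC with h | h
  · exact huK h
  · exact G.irrefl (hnbr u huC h)
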